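/- arXiv:2406.17410 — 2 statements merged into one kernel-verified Lean document; each statement's English description precedes it below -/
import Mathlib

section
/- The function k : (1, +∞) → ℝ is continuous on (1, +∞), and satisfies lim_{p→1+} k(p) = 0 and lim_{p→+∞} k(p) = 1/2. -/
open Set MeasureTheory Filter

/-- The conjugate exponent `p' = p/(p-1)`. -/
noncomputable def pconj (p : ℝ) : ℝ := p / (p - 1)

/-- The constant `k(p)` from the paper. -/
noncomputable def kfun (p : ℝ) : ℝ :=
  if p < 2 then 1 / (2 ^ (pconj p - 1) - 1)
  else if p = 2 then 1
  else pconj p / (pconj p - 1 +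
    (1 + pconj p * (pconj p - 1) ^ ((1 : ℝ) / (pconj p - 2)) +
      (pconj p - 1) ^ (pconj p / (pconj p - 2))) /
    (1 + (pconj p - 1) ^ ((1 : ℝ) / (pconj p - 2))) ^ pconj p)

/-- Standing assumptions on the data `p, θ, D, H, h, g` (combustion setting). -/
structure CombSetup (p θ : ℝ) (D H h g : ℝ → ℝ) : Prop where
  hp : 1 < p
  hθ0 : 0 < θ
  hθ1 : θ < 1
  hD : ContDiffOn ℝ 1 D (Ioo 0 1)
  hDpos : ∀ v ∈ Ioo (0 : ℝ) 1, 0 < D v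
  hH : ContDiffOn ℝ 1 H (Icc 0 1)
  hH0 : H 0 = 0
  hh : ContinuousOn h (Icc 0 1)
  hHd : ∀ v ∈ Icc (0 : ℝ) 1, HasDerivWithinAt H (h v) (Icc 0 1) v
  hgc : ContinuousOn g (Icc 0 1)
  hg0 : ∀ v ∈ Icc (0 : ℝ) θ, g v = 0
  hgpos : ∀ v ∈ Ioo θ 1, 0 < g v
  hg1 : g 1 = 0
  hInt : IntegrableOn (fun v => D v ^ (pconj p - 1) * g v) (Ioo 0 1)

/-- The diffusive flux `ξ ↦ D(u(ξ)) |u'(ξ)|^{p-2} u'(ξ)`. -/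
noncomputable def flux (p : ℝ) (D u : ℝ → ℝ) : ℝ → ℝ :=
  fun ξ => D (u ξ) * (|deriv u ξ| ^ (p - 2) * deriv u ξ)

/-- Solution of the traveling-wave problem with speed `c`. -/
structure IsTWSol (p c : ℝ) (D h g : ℝ → ℝ) (u : ℝ → ℝ) : Prop where
  cont : Continuous u
  mem : ∀ ξ, u ξ ∈ Icc (0 : ℝ) 1
  smooth : ContDiffOn ℝ 1 u {ξ | u ξ ∈ Ioo (0 : ℝ) 1}
  eqn : ∀ ξ ∈ {ξ | u ξ ∈ Ioo (0 : ℝ) 1},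
    HasDerivAt (flux p D u) (-(c + h (u ξ)) * deriv u ξ - g (u ξ)) ξ
  flux_cont : Continuous (fun ξ => if u ξ ∈ Ioo (0 : ℝ) 1 then flux p D u ξ else 0)
  flux_to0 : ∀ ε > 0, ∃ δ > 0, ∀ ξ, u ξ ∈ Ioo (0 : ℝ) 1 → u ξ < δ → |flux p D u ξ| < ε
  flux_to1 : ∀ ε > 0, ∃ δ > 0, ∀ ξ, u ξ ∈ Ioo (0 : ℝ) 1 → 1 - δ < u ξ → |flux p D u ξ| < ε
  lim_bot : Tendsto u atBot (nhds 1)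
  lim_top : Tendsto u atTop (nhds 0)

/-- Positive solution of the first-order problem with parameter `c`. -/
structure IsFOSol (p c : ℝ) (D h g : ℝ → ℝ) (y : ℝ → ℝ) : Prop where
  cont : ContinuousOn y (Icc 0 1)
  eqn : ∀ v ∈ Ioo (0 : ℝ) 1, HasDerivAt y
    (pconj p * ((c + h v) * (max (y v) 0) ^ (1 / p) - D v ^ (pconj p - 1) * g v)) v
  y0 : y 0 = 0
  y1 : y 1 = 0
  pos : ∀ v ∈ Ioo (0 : ℝ) 1, 0 < y v


section Aux

open Real Topology

lemma tendsto_sub_const (a c b : ℝ) (h : a - c = b) :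
    Tendsto (fun q : ℝ => q - c) (𝓝 a) (𝓝 b) := by
  rw [← h]
  exact (continuous_sub_right c).tendsto a

/-- The p>2 branch of `kfun`, as a function of `q = pconj p`. -/
noncomputable def kright (q : ℝ) : ℝ :=
  q / (q - 1 +
    (1 + q * (q - 1) ^ ((1 : ℝ) / (q - 2)) + (q - 1) ^ (q / (q - 2))) /
    (1 + (q - 1) ^ ((1 : ℝ) / (q - 2))) ^ q)

lemma kfun_eq_left {p : ℝ} (hp : p < 2) : kfun p = 1 / (2 ^ (pconj p - 1) - 1) := by
  rw [kfun, if_pos hp]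

lemma kfun_eq_right {p : ℝ} (hp : 2 < p) : kfun p = kright (pconj p) := by
  rw [kfun, if_neg (by linarith), if_neg (by linarith), kright]

lemma kfun_two : kfun 2 = 1 := by
  rw [kfun, if_neg (lt_irrefl 2), if_pos rfl]

lemma pconj_two : pconj 2 = 2 := by norm_num [pconj]

lemma continuousAt_pconj {p : ℝ} (hp : p ≠ 1) : ContinuousAt pconj p := by
  apply ContinuousAt.div continuousAt_id (by fun_prop)
  exact sub_ne_zero.mpr hp

lemma pconj_mem_Ioo {p : ℝ} (hp : 2 < p) : pconj p ∈ Ioo (1 : ℝ) 2 := by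
  have h1 : 0 < p - 1 := by linarith
  constructor
  · rw [pconj, lt_div_iff₀ h1]; linarith
  · rw [pconj, div_lt_iff₀ h1]; linarith

lemma pconj_gt_two {p : ℝ} (hp1 : 1 < p) (hp2 : p < 2) : 2 < pconj p := by
  have h1 : 0 < p - 1 := by linarith
  rw [pconj, lt_div_iff₀ h1]; linarith

lemma pconj_gt_one {p : ℝ} (hp1 : 1 < p) : 1 < pconj p := by
  have h1 : 0 < p - 1 := by linarith
  rw [pconj, lt_div_iff₀ h1]; linarith

/-- `log (q-1) / (q-2) → 1` as `q → 2`. -/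
lemma tendsto_L_two : Tendsto (fun q : ℝ => log (q - 1) / (q - 2)) (𝓝[≠] (2 : ℝ)) (𝓝 1) := by
  have h := hasDerivAt_iff_tendsto_slope.mp (Real.hasDerivAt_log one_ne_zero)
  have hmap : Tendsto (fun q : ℝ => q - 1) (𝓝[≠] (2 : ℝ)) (𝓝[≠] (1 : ℝ)) := by
    rw [tendsto_nhdsWithin_iff]
    constructor
    · exact (tendsto_sub_const 2 1 1 (by norm_num)).mono_left nhdsWithin_le_nhds
    · filter_upwards [self_mem_nhdsWithin] with q hq
      simp only [mem_compl_iff, mem_singleton_iff] at hq ⊢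
      intro h'; apply hq; linarith
  have h2 := h.comp hmap
  simp only [one_div, inv_one] at h2
  apply h2.congr
  intro q
  simp [slope_def_field, Real.log_one]
  ring_nf

lemma exp_form {q : ℝ} (hq : q ∈ Ioo (1 : ℝ) 2) :
    (q - 1) ^ ((1 : ℝ) / (q - 2)) = exp (log (q - 1) / (q - 2)) := by
  rw [Real.rpow_def_of_pos (by linarith [hq.1] : (0:ℝ) < q - 1), mul_one_div]

lemma tendsto_r_two :
    Tendsto (fun q : ℝ => (q - 1) ^ ((1 : ℝ) / (q - 2))) (𝓝[<] (2 : ℝ)) (𝓝 (exp 1)) := by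
  have hL : Tendsto (fun q : ℝ => log (q - 1) / (q - 2)) (𝓝[<] (2 : ℝ)) (𝓝 1) :=
    tendsto_L_two.mono_left (nhdsWithin_mono _ fun x hx => ne_of_lt hx)
  have h := (Real.continuous_exp.tendsto 1).comp hL
  apply h.congr'
  filter_upwards [Ioo_mem_nhdsLT (by norm_num : (1:ℝ) < 2)] with q hq
  exact (exp_form hq).symm

lemma tendsto_rq_two :
    Tendsto (fun q : ℝ => (q - 1) ^ (q / (q - 2))) (𝓝[<] (2 : ℝ)) (𝓝 (exp 1 * exp 1)) := by
  have hL : Tendsto (fun q : ℝ => log (q - 1) / (q - 2)) (𝓝[<] (2 : ℝ)) (𝓝 1) :=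
    tendsto_L_two.mono_left (nhdsWithin_mono _ fun x hx => ne_of_lt hx)
  have hid : Tendsto (fun q : ℝ => q) (𝓝[<] (2 : ℝ)) (𝓝 2) :=
    tendsto_id.mono_left nhdsWithin_le_nhds
  have hLq : Tendsto (fun q : ℝ => log (q - 1) / (q - 2) * q) (𝓝[<] (2 : ℝ)) (𝓝 2) := by
    simpa using hL.mul hid
  have h := (Real.continuous_exp.tendsto 2).comp hLq
  have hval : exp 2 = exp 1 * exp 1 := by
    rw [← Real.exp_add]; norm_num
  rw [hval] at h
  apply h.congr'
  filter_upwards [Ioo_mem_nhdsLT (by norm_num : (1:ℝ) < 2)] with q hq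
  have ht : (0:ℝ) < q - 1 := by linarith [hq.1]
  rw [Real.rpow_def_of_pos ht]
  simp only [Function.comp]
  congr 1
  ring

lemma tendsto_kright_two : Tendsto kright (𝓝[<] (2 : ℝ)) (𝓝 1) := by
  have hid : Tendsto (fun q : ℝ => q) (𝓝[<] (2 : ℝ)) (𝓝 2) :=
    tendsto_id.mono_left nhdsWithin_le_nhds
  have hr := tendsto_r_two
  have hrq := tendsto_rq_two
  have hbase : Tendsto (fun q : ℝ => 1 + (q - 1) ^ ((1 : ℝ) / (q - 2))) (𝓝[<] (2 : ℝ))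
      (𝓝 (1 + exp 1)) := tendsto_const_nhds.add hr
  have hepos : (0:ℝ) < exp 1 := Real.exp_pos 1
  have hD : Tendsto (fun q : ℝ => (1 + (q - 1) ^ ((1 : ℝ) / (q - 2))) ^ q) (𝓝[<] (2 : ℝ))
      (𝓝 ((1 + exp 1) ^ (2:ℝ))) := hbase.rpow hid (Or.inl (by positivity))
  have hN : Tendsto (fun q : ℝ =>
      1 + q * (q - 1) ^ ((1 : ℝ) / (q - 2)) + (q - 1) ^ (q / (q - 2))) (𝓝[<] (2 : ℝ))
      (𝓝 (1 + 2 * exp 1 + exp 1 * exp 1)) :=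
    (tendsto_const_nhds.add (hid.mul hr)).add hrq
  have hDpos : (0:ℝ) < (1 + exp 1) ^ (2:ℝ) := Real.rpow_pos_of_pos (by positivity) _
  have hfrac := hN.div hD hDpos.ne'
  have hden : Tendsto (fun q : ℝ => q - 1 +
      (1 + q * (q - 1) ^ ((1 : ℝ) / (q - 2)) + (q - 1) ^ (q / (q - 2))) /
      (1 + (q - 1) ^ ((1 : ℝ) / (q - 2))) ^ q) (𝓝[<] (2 : ℝ))
      (𝓝 (2 - 1 + (1 + 2 * exp 1 + exp 1 * exp 1) / (1 + exp 1) ^ (2:ℝ))) :=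
    (hid.sub tendsto_const_nhds).add hfrac
  have hkey : (1 + 2 * exp 1 + exp 1 * exp 1) / (1 + exp 1) ^ (2:ℝ) = 1 := by
    rw [Real.rpow_two]
    rw [show (1 + 2 * exp 1 + exp 1 * exp 1) = (1 + exp 1)^2 by ring]
    exact div_self (by positivity)
  have hdenval : (2:ℝ) - 1 + (1 + 2 * exp 1 + exp 1 * exp 1) / (1 + exp 1) ^ (2:ℝ) = 2 := by
    rw [hkey]; norm_num
  rw [hdenval] at hden
  have h := hid.div hden (by norm_num : (2:ℝ) ≠ 0)
  rw [show (2:ℝ) / 2 = 1 by norm_num] at h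
  exact h

lemma tendsto_sub_one_Ioi : Tendsto (fun q : ℝ => q - 1) (𝓝[>] (1 : ℝ)) (𝓝[>] (0 : ℝ)) := by
  rw [tendsto_nhdsWithin_iff]
  constructor
  · exact (tendsto_sub_const 1 1 0 (by norm_num)).mono_left nhdsWithin_le_nhds
  · filter_upwards [self_mem_nhdsWithin] with q hq
    simp only [mem_Ioi] at hq ⊢; linarith

lemma tendsto_kright_one : Tendsto kright (𝓝[>] (1 : ℝ)) (𝓝 (1 / 2)) := by
  have hmemIoo : Ioo (1:ℝ) 2 ∈ 𝓝[>] (1:ℝ) :=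
    Ioo_mem_nhdsGT (by norm_num : (1:ℝ) < 2)
  have hid : Tendsto (fun q : ℝ => q) (𝓝[>] (1 : ℝ)) (𝓝 1) :=
    tendsto_id.mono_left nhdsWithin_le_nhds
  have hsub := tendsto_sub_one_Ioi
  have hlog : Tendsto (fun q : ℝ => log (q - 1)) (𝓝[>] (1 : ℝ)) atBot :=
    Real.tendsto_log_nhdsGT_zero.comp hsub
  have hinv2 : Tendsto (fun q : ℝ => (q - 2)⁻¹) (𝓝[>] (1 : ℝ)) (𝓝 (-1)) := by
    have h1 : Tendsto (fun q : ℝ => q - 2) (𝓝[>] (1 : ℝ)) (𝓝 (-1)) :=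
      (tendsto_sub_const 1 2 (-1) (by norm_num)).mono_left nhdsWithin_le_nhds
    have h2 := h1.inv₀ (by norm_num : (-1:ℝ) ≠ 0)
    rw [show ((-1:ℝ))⁻¹ = -1 by norm_num] at h2
    exact h2
  have hL : Tendsto (fun q : ℝ => log (q - 1) / (q - 2)) (𝓝[>] (1 : ℝ)) atTop := by
    have := hlog.atBot_mul_neg (by norm_num : (-1:ℝ) < 0) hinv2
    apply this.congr
    intro q; rw [div_eq_mul_inv]
  -- E := exp L  tends to atTop
  have hE : Tendsto (fun q : ℝ => exp (log (q - 1) / (q - 2))) (𝓝[>] (1 : ℝ)) atTop :=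
    Real.tendsto_exp_atTop.comp hL
  have hEinv : Tendsto (fun q : ℝ => (exp (log (q - 1) / (q - 2)))⁻¹) (𝓝[>] (1 : ℝ)) (𝓝 0) :=
    hE.inv_tendsto_atTop
  -- (q-1) * log(q-1) → 0
  have hxlog : Tendsto (fun q : ℝ => log (q - 1) * (q - 1)) (𝓝[>] (1 : ℝ)) (𝓝 0) := by
    have h0 : Tendsto (fun x : ℝ => log x * x) (𝓝[>] (0:ℝ)) (𝓝 0) := by
      have := tendsto_log_mul_rpow_nhdsGT_zero one_pos
      apply this.congr'
      filter_upwards [self_mem_nhdsWithin] with x hx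
      rw [Real.rpow_one]
    exact h0.comp hsub
  have htL : Tendsto (fun q : ℝ => (q - 1) * (log (q - 1) / (q - 2))) (𝓝[>] (1 : ℝ)) (𝓝 0) := by
    have h := hxlog.mul hinv2
    rw [show (0:ℝ) * -1 = 0 by norm_num] at h
    apply h.congr
    intro q; ring
  have hexp_tL : Tendsto (fun q : ℝ => exp ((q - 1) * (log (q - 1) / (q - 2))))
      (𝓝[>] (1 : ℝ)) (𝓝 1) := by
    have h := (Real.continuous_exp.tendsto 0).comp htL
    rw [Real.exp_zero] at h
    exact h
  have hbase : Tendsto (fun q : ℝ => 1 + (exp (log (q - 1) / (q - 2)))⁻¹)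
      (𝓝[>] (1 : ℝ)) (𝓝 1) := by
    have h := (tendsto_const_nhds (x := (1:ℝ))).add hEinv
    rw [show (1:ℝ) + 0 = 1 by norm_num] at h
    exact h
  have hpow : Tendsto (fun q : ℝ => (1 + (exp (log (q - 1) / (q - 2)))⁻¹) ^ q)
      (𝓝[>] (1 : ℝ)) (𝓝 1) := by
    have h := hbase.rpow hid (Or.inl one_ne_zero)
    rw [Real.one_rpow] at h
    exact h
  have hfracnum : Tendsto (fun q : ℝ => (exp (log (q - 1) / (q - 2)))⁻¹ + q +
      exp ((q - 1) * (log (q - 1) / (q - 2)))) (𝓝[>] (1 : ℝ)) (𝓝 2) := by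
    have h := (hEinv.add hid).add hexp_tL
    rw [show (0:ℝ) + 1 + 1 = 2 by norm_num] at h
    exact h
  have hfracden : Tendsto (fun q : ℝ => exp ((q - 1) * (log (q - 1) / (q - 2))) *
      (1 + (exp (log (q - 1) / (q - 2)))⁻¹) ^ q) (𝓝[>] (1 : ℝ)) (𝓝 1) := by
    have h := hexp_tL.mul hpow
    rw [show (1:ℝ) * 1 = 1 by norm_num] at h
    exact h
  have hfrac := hfracnum.div hfracden (by norm_num : (1:ℝ) ≠ 0)
  rw [show (2:ℝ) / 1 = 2 by norm_num] at hfrac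
  have hden : Tendsto (fun q : ℝ => q - 1 + ((exp (log (q - 1) / (q - 2)))⁻¹ + q +
      exp ((q - 1) * (log (q - 1) / (q - 2)))) / (exp ((q - 1) * (log (q - 1) / (q - 2))) *
      (1 + (exp (log (q - 1) / (q - 2)))⁻¹) ^ q)) (𝓝[>] (1 : ℝ)) (𝓝 2) := by
    have h := (hid.sub (tendsto_const_nhds (x := (1:ℝ)))).add hfrac
    rw [show (1:ℝ) - 1 + 2 = 2 by norm_num] at h
    exact h
  have hG := hid.div hden (by norm_num : (2:ℝ) ≠ 0)
  apply hG.congr'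
  filter_upwards [hmemIoo] with q hq
  -- now the algebraic identification on Ioo 1 2
  obtain ⟨hq1, hq2⟩ := hq
  have ht : (0:ℝ) < q - 1 := by linarith
  have hr : (q - 1) ^ ((1 : ℝ) / (q - 2)) = exp (log (q - 1) / (q - 2)) :=
    exp_form ⟨hq1, hq2⟩
  set r := (q - 1) ^ ((1 : ℝ) / (q - 2)) with hrdef
  have hrpos : 0 < r := Real.rpow_pos_of_pos ht _
  have h2 : exp ((q - 1) * (log (q - 1) / (q - 2))) = r ^ (q - 1) := by
    rw [hr, ← Real.exp_mul, mul_comm]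
  have h3 : (q - 1) ^ (q / (q - 2)) = r ^ q := by
    rw [hrdef, ← Real.rpow_mul ht.le]
    congr 1
    ring
  have hq_split : r ^ q = r ^ (q - 1) * r := by
    rw [← Real.rpow_add_one hrpos.ne' (q - 1)]
    norm_num
  have hDsplit : (1 + r) ^ q = r ^ (q - 1) * (1 + r⁻¹) ^ q * r := by
    have h1r : (1:ℝ) + r = r * (1 + r⁻¹) := by
      rw [mul_add, mul_one, mul_inv_cancel₀ hrpos.ne', add_comm]
    rw [h1r, Real.mul_rpow hrpos.le (by positivity), hq_split]
    ring
  have hkey : (1 + q * r + (q - 1) ^ (q / (q - 2))) / (1 + r) ^ q =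
      (r⁻¹ + q + r ^ (q - 1)) / (r ^ (q - 1) * (1 + r⁻¹) ^ q) := by
    rw [h3, hq_split, hDsplit]
    rw [show 1 + q * r + r ^ (q - 1) * r = (r⁻¹ + q + r ^ (q - 1)) * r by field_simp]
    rw [mul_div_mul_right _ _ hrpos.ne']
  show _ = kright q
  simp only [Pi.div_apply]
  rw [← hr, h2, kright, ← hrdef, ← hkey]

lemma rpos_of_Ioo {q : ℝ} (hq : q ∈ Ioo (1:ℝ) 2) : 0 < (q - 1) ^ ((1 : ℝ) / (q - 2)) :=
  Real.rpow_pos_of_pos (by linarith [hq.1]) _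

lemma continuousAt_kright {q : ℝ} (hq : q ∈ Ioo (1 : ℝ) 2) : ContinuousAt kright q := by
  obtain ⟨hq1, hq2⟩ := hq
  have ht : (0:ℝ) < q - 1 := by linarith
  have hs : q - 2 ≠ 0 := by intro h; linarith
  have hc1 : ContinuousAt (fun q : ℝ => (q - 1) ^ ((1 : ℝ) / (q - 2))) q := by
    apply ContinuousAt.rpow (by fun_prop)
    · exact ContinuousAt.div continuousAt_const (by fun_prop) hs
    · exact Or.inl ht.ne'
  have hc2 : ContinuousAt (fun q : ℝ => (q - 1) ^ (q / (q - 2))) q := by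
    apply ContinuousAt.rpow (by fun_prop)
    · exact ContinuousAt.div (by fun_prop) (by fun_prop) hs
    · exact Or.inl ht.ne'
  have hrpos : 0 < (q - 1) ^ ((1 : ℝ) / (q - 2)) := Real.rpow_pos_of_pos ht _
  have hc3 : ContinuousAt (fun q : ℝ => (1 + (q - 1) ^ ((1 : ℝ) / (q - 2))) ^ q) q := by
    apply ContinuousAt.rpow (continuousAt_const.add hc1) continuousAt_id
    exact Or.inl (ne_of_gt (by simp only [Pi.add_apply]; linarith [hrpos]))
  have hrqpos : 0 < (q - 1) ^ (q / (q - 2)) := Real.rpow_pos_of_pos ht _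
  have hDpos : 0 < (1 + (q - 1) ^ ((1 : ℝ) / (q - 2))) ^ q :=
    Real.rpow_pos_of_pos (by positivity) _
  have hNpos : 0 < 1 + q * (q - 1) ^ ((1 : ℝ) / (q - 2)) + (q - 1) ^ (q / (q - 2)) := by
    have : 0 < q * (q - 1) ^ ((1 : ℝ) / (q - 2)) := mul_pos (by linarith) hrpos
    linarith
  have hNc : ContinuousAt (fun q : ℝ =>
      1 + q * (q - 1) ^ ((1 : ℝ) / (q - 2)) + (q - 1) ^ (q / (q - 2))) q :=
    (continuousAt_const.add (continuousAt_id.mul hc1)).add hc2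
  have hfracc := ContinuousAt.div hNc hc3 hDpos.ne'
  have hdenc : ContinuousAt (fun q : ℝ => q - 1 +
      (1 + q * (q - 1) ^ ((1 : ℝ) / (q - 2)) + (q - 1) ^ (q / (q - 2))) /
      (1 + (q - 1) ^ ((1 : ℝ) / (q - 2))) ^ q) q :=
    (continuousAt_id.sub continuousAt_const).add hfracc
  have hdenpos : 0 < q - 1 +
      (1 + q * (q - 1) ^ ((1 : ℝ) / (q - 2)) + (q - 1) ^ (q / (q - 2))) /
      (1 + (q - 1) ^ ((1 : ℝ) / (q - 2))) ^ q := by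
    have := div_pos hNpos hDpos
    linarith
  exact ContinuousAt.div continuousAt_id hdenc hdenpos.ne'

lemma continuousAt_kleft {p : ℝ} (hp1 : 1 < p) (hp2 : p ≤ 2) :
    ContinuousAt (fun p : ℝ => 1 / ((2:ℝ) ^ (pconj p - 1) - 1)) p := by
  have hpc : ContinuousAt pconj p := continuousAt_pconj (by linarith)
  have hc2 : ContinuousAt (fun p : ℝ => (2:ℝ) ^ (pconj p - 1)) p :=
    ContinuousAt.rpow continuousAt_const (hpc.sub continuousAt_const)
      (Or.inl (by norm_num))
  have hy : 0 < pconj p - 1 := by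
    have := pconj_gt_one hp1
    linarith
  have h1 : (1:ℝ) < (2:ℝ) ^ (pconj p - 1) :=
    (Real.one_lt_rpow_iff_of_pos (by norm_num)).mpr (Or.inl ⟨one_lt_two, hy⟩)
  have hne : (2:ℝ) ^ (pconj p - 1) - 1 ≠ 0 := by
    intro h
    rw [sub_eq_zero] at h
    rw [h] at h1
    exact lt_irrefl 1 h1
  exact ContinuousAt.div continuousAt_const (hc2.sub continuousAt_const) hne

lemma tendsto_pconj_two_right : Tendsto pconj (𝓝[>] (2 : ℝ)) (𝓝[<] (2 : ℝ)) := by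
  rw [tendsto_nhdsWithin_iff]
  constructor
  · have := (continuousAt_pconj (by norm_num : (2:ℝ) ≠ 1)).tendsto
    rw [pconj_two] at this
    exact this.mono_left nhdsWithin_le_nhds
  · filter_upwards [self_mem_nhdsWithin] with p hp
    exact (pconj_mem_Ioo hp).2

lemma tendsto_pconj_one_atTop : Tendsto pconj (𝓝[>] (1 : ℝ)) atTop := by
  have hsub : Tendsto (fun p : ℝ => p - 1) (𝓝[>] (1 : ℝ)) (𝓝[>] (0 : ℝ)) :=
    tendsto_sub_one_Ioi
  have hinv : Tendsto (fun p : ℝ => (p - 1)⁻¹) (𝓝[>] (1 : ℝ)) atTop :=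
    tendsto_inv_nhdsGT_zero.comp hsub
  have hid : Tendsto (fun p : ℝ => p) (𝓝[>] (1 : ℝ)) (𝓝 1) :=
    tendsto_id.mono_left nhdsWithin_le_nhds
  have := hid.pos_mul_atTop one_pos hinv
  apply this.congr
  intro p
  rw [pconj, div_eq_mul_inv]

lemma tendsto_pconj_atTop : Tendsto pconj atTop (𝓝[>] (1 : ℝ)) := by
  rw [tendsto_nhdsWithin_iff]
  constructor
  · have h1 : Tendsto (fun p : ℝ => 1 + (p - 1)⁻¹) atTop (𝓝 1) := by
      have h2 : Tendsto (fun p : ℝ => p - 1) atTop atTop :=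
        tendsto_atTop_add_const_right _ (-1) tendsto_id
      have h := (tendsto_const_nhds (x := (1:ℝ))).add (tendsto_inv_atTop_zero.comp h2)
      rw [show (1:ℝ) + 0 = 1 by norm_num] at h
      exact h
    apply h1.congr'
    filter_upwards [eventually_gt_atTop (1:ℝ)] with p hp
    have h1 : p - 1 ≠ 0 := by intro h; linarith
    rw [pconj]
    field_simp
    ring
  · filter_upwards [eventually_gt_atTop (1:ℝ)] with p hp
    exact pconj_gt_one hp

lemma tendsto_kfun_two_left : Tendsto kfun (𝓝[<] (2 : ℝ)) (𝓝 1) := by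
  have hc := continuousAt_kleft one_lt_two le_rfl
  have hval : 1 / ((2:ℝ) ^ (pconj 2 - 1) - 1) = 1 := by
    norm_num [pconj_two, Real.rpow_one]
  have h := hc.tendsto
  rw [hval] at h
  have h2 := h.mono_left (nhdsWithin_le_nhds (s := Iio (2:ℝ)))
  apply h2.congr'
  filter_upwards [self_mem_nhdsWithin] with p hp
  exact (kfun_eq_left hp).symm

lemma tendsto_kfun_two_right : Tendsto kfun (𝓝[>] (2 : ℝ)) (𝓝 1) := by
  have h := tendsto_kright_two.comp tendsto_pconj_two_right
  apply h.congr'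
  filter_upwards [self_mem_nhdsWithin] with p hp
  exact (kfun_eq_right hp).symm

lemma tendsto_kfun_one : Tendsto kfun (𝓝[>] (1 : ℝ)) (𝓝 0) := by
  have h2q : Tendsto (fun q : ℝ => (2:ℝ) ^ (q - 1)) atTop atTop := by
    have hexp : Tendsto (fun q : ℝ => Real.exp (Real.log 2 * (q - 1))) atTop atTop := by
      apply Real.tendsto_exp_atTop.comp
      have hsub : Tendsto (fun q : ℝ => q - 1) atTop atTop :=
        tendsto_atTop_add_const_right _ (-1) tendsto_id
      exact hsub.const_mul_atTop (Real.log_pos one_lt_two)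
    apply hexp.congr
    intro q
    rw [Real.rpow_def_of_pos two_pos]
  have hden : Tendsto (fun p : ℝ => (2:ℝ) ^ (pconj p - 1) - 1) (𝓝[>] (1:ℝ)) atTop := by
    apply tendsto_atTop_add_const_right _ (-1)
    exact h2q.comp tendsto_pconj_one_atTop
  have h := tendsto_inv_atTop_zero.comp hden
  apply h.congr'
  filter_upwards [Ioo_mem_nhdsGT (by norm_num : (1:ℝ) < 2)] with p hp
  rw [kfun_eq_left hp.2]
  simp [Function.comp, one_div]

lemma tendsto_kfun_atTop : Tendsto kfun atTop (𝓝 (1/2 : ℝ)) := by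
  have h := tendsto_kright_one.comp tendsto_pconj_atTop
  apply h.congr'
  filter_upwards [eventually_gt_atTop (2:ℝ)] with p hp
  exact (kfun_eq_right hp).symm

lemma continuousAt_kfun_two : ContinuousAt kfun 2 := by
  rw [ContinuousAt, kfun_two]
  rw [← nhdsNE_sup_pure (2:ℝ), ← nhdsLT_sup_nhdsGT (2:ℝ)]
  rw [tendsto_sup, tendsto_sup]
  refine ⟨⟨tendsto_kfun_two_left, tendsto_kfun_two_right⟩, ?_⟩
  have := tendsto_pure_nhds kfun 2
  rwa [kfun_two] at this

end Aux

/-- Properties of `k`.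
`k` is continuous on `(1,∞)`, `k(p) → 0` as `p → 1+` and `k(p) → 1/2` as `p → +∞`. -/
theorem stmt15 :
    ContinuousOn kfun (Ioi (1 : ℝ)) ∧
    Tendsto kfun (nhdsWithin 1 (Ioi (1 : ℝ))) (nhds 0) ∧
    Tendsto kfun atTop (nhds (1 / 2 : ℝ)) := by
  refine ⟨?_, ?_, ?_⟩
  · -- continuity on (1, ∞)
    intro p hp
    simp only [mem_Ioi] at hp
    rcases lt_trichotomy p 2 with h2 | h2 | h2
    · apply ContinuousAt.continuousWithinAt
      apply (continuousAt_kleft hp h2.le).congr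
      filter_upwards [Iio_mem_nhds h2] with q hq
      exact (kfun_eq_left hq).symm
    · subst h2
      exact continuousAt_kfun_two.continuousWithinAt
    · apply ContinuousAt.continuousWithinAt
      have hpc : ContinuousAt pconj p := continuousAt_pconj (by linarith)
      have hk : ContinuousAt kright (pconj p) := continuousAt_kright (pconj_mem_Ioo h2)
      apply (hk.comp hpc).congr
      filter_upwards [Ioi_mem_nhds h2] with q hq
      exact (kfun_eq_right hq).symm
  · -- limit 0 as p → 1⁺
    exact tendsto_kfun_one
  · -- limit 1/2 as p → ∞
    exact tendsto_kfun_atTop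
end

section
/- Assume h(u) ≥ 0 for all u ∈ [0,1] and H(1)^{p'} ≤ k(p) ∫₀¹ D(u)^{p'−1} g(u) du. Let y₀ : [0,1] → ℝ be continuous, differentiable on (0,1), with y₀(1) = 0 and y₀'(u) = p'·[h(u)·(max(y₀(u),0))^{1/p} − D(u)^{p'−1} g(u)] for all u ∈ (0,1). Then y₀(θ)^{1/p'} > H(θ). -/
open Set MeasureTheory Filter
open Topology

section StmtSixteenHelpers
variable {p θ : ℝ} {D H h g y₀ : ℝ → ℝ}

lemma one_lt_pconj {p : ℝ} (hp : 1 < p) : 1 < pconj p := by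
  rw [pconj, lt_div_iff₀ (by linarith)]; linarith

theorem step_pos (hp : 1 < p) (hθ0 : 0 < θ) (hθ1 : θ < 1)
    (hD : ContinuousOn D (Ioo 0 1))
    (hDpos : ∀ v ∈ Ioo (0 : ℝ) 1, 0 < D v)
    (hh : ContinuousOn h (Icc 0 1))
    (hgc : ContinuousOn g (Icc 0 1))
    (hgpos : ∀ v ∈ Ioo θ 1, 0 < g v)
    (hgnn : ∀ v ∈ Icc (0:ℝ) 1, 0 ≤ g v)
    (hy₀c : ContinuousOn y₀ (Icc 0 1)) (hy₀1 : y₀ 1 = 0)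
    (hy₀eq : ∀ v ∈ Ioo (0 : ℝ) 1, HasDerivAt y₀
      (pconj p * (h v * (max (y₀ v) 0) ^ (1 / p) - D v ^ (pconj p - 1) * g v)) v) :
    ∀ v ∈ Ioo θ 1, 0 < y₀ v := by
  have hp0 : (0:ℝ) < p := by linarith
  have hq1 : 1 < pconj p := one_lt_pconj hp
  have hq0 : (0:ℝ) < pconj p := by linarith
  have hinvp : (0:ℝ) < 1 / p := by positivity
  have hIoo01 : Ioo θ 1 ⊆ Ioo (0:ℝ) 1 := fun v hv => ⟨hθ0.trans hv.1, hv.2⟩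
  have hfpos : ∀ v ∈ Ioo θ 1, 0 < D v ^ (pconj p - 1) * g v := fun v hv =>
    mul_pos (Real.rpow_pos_of_pos (hDpos v (hIoo01 hv)) _) (hgpos v hv)
  have hfnn : ∀ v ∈ Ioo (0:ℝ) 1, 0 ≤ D v ^ (pconj p - 1) * g v := fun v hv =>
    mul_nonneg (Real.rpow_pos_of_pos (hDpos v hv) _).le (hgnn v ⟨hv.1.le, hv.2.le⟩)
  have hy₀ca : ∀ v ∈ Ioo (0:ℝ) 1, ContinuousAt y₀ v := fun v hv =>
    hy₀c.continuousAt (Icc_mem_nhds hv.1 hv.2)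
  obtain ⟨M, hM⟩ := isCompact_Icc.exists_bound_of_continuousOn hh
  have hM0 : 0 ≤ M := le_trans (norm_nonneg _) (hM 0 ⟨le_rfl, zero_le_one⟩)
  by_contra hcon
  push_neg at hcon
  obtain ⟨a, ha, hya⟩ := hcon
  have ha0 : 0 < a := hθ0.trans ha.1
  -- claim1 : y₀ ≤ 0 on [a,1]
  have claim1 : ∀ v ∈ Icc a 1, y₀ v ≤ 0 := by
    by_contra hcon2
    push_neg at hcon2
    obtain ⟨b, hb, hyb⟩ := hcon2
    have hab : a < b := by
      rcases lt_or_eq_of_le hb.1 with hx | hx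
      · exact hx
      · exfalso; rw [← hx] at hyb; linarith
    have hb1 : b < 1 := by
      rcases lt_or_eq_of_le hb.2 with hx | hx
      · exact hx
      · exfalso; rw [hx, hy₀1] at hyb; linarith
    set T : Set ℝ := Icc a b ∩ y₀ ⁻¹' (Iic 0) with hT
    have hTc : IsClosed T := by
      apply ContinuousOn.preimage_isClosed_of_isClosed
        (hy₀c.mono (Icc_subset_Icc ha0.le hb.2)) isClosed_Icc isClosed_Iic
    have hTne : T.Nonempty := ⟨a, ⟨left_mem_Icc.2 hab.le, hya⟩⟩
    have hTbdd : BddAbove T := ⟨b, fun x hx => hx.1.2⟩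
    set c := sSup T with hc
    have hcT : c ∈ T := hTc.csSup_mem hTne hTbdd
    have hca : a ≤ c := hcT.1.1
    have hcyc : y₀ c ≤ 0 := hcT.2
    have hcb : c < b := lt_of_le_of_ne hcT.1.2 (by intro hx; rw [hx] at hcyc; linarith)
    have hcpos : ∀ v ∈ Ioc c b, 0 < y₀ v := by
      intro v hv
      by_contra hvneg
      push_neg at hvneg
      have hvT : v ∈ T := ⟨⟨hca.trans hv.1.le, hv.2⟩, hvneg⟩
      exact absurd (le_csSup hTbdd hvT) (not_le.2 hv.1)
    have hcI : c ∈ Ioo θ 1 := ⟨lt_of_lt_of_le ha.1 hca, lt_trans hcb hb1⟩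
    have hcI01 : c ∈ Ioo (0:ℝ) 1 := hIoo01 hcI
    have hyc0 : y₀ c = 0 := by
      have ht : Tendsto y₀ (𝓝[>] c) (𝓝 (y₀ c)) :=
        ((hy₀ca c hcI01).tendsto).mono_left nhdsWithin_le_nhds
      have hev : ∀ᶠ v in 𝓝[>] c, 0 ≤ y₀ v := by
        filter_upwards [Ioc_mem_nhdsGT_of_mem ⟨le_rfl, hcb⟩] with v hv
        exact (hcpos v hv).le
      exact le_antisymm hcyc (ge_of_tendsto ht hev)
    have hfc : ContinuousAt (fun v => D v ^ (pconj p - 1) * g v) c := by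
      have hcont : ContinuousOn (fun v => D v ^ (pconj p - 1) * g v) (Ioo θ 1) := by
        apply ContinuousOn.mul
        · exact ((hD.mono hIoo01).rpow_const
            (fun x hx => Or.inl (hDpos x (hIoo01 hx)).ne'))
        · exact hgc.mono (fun v hv => ⟨(hθ0.trans hv.1).le, hv.2.le⟩)
      exact hcont.continuousAt (isOpen_Ioo.mem_nhds hcI)
    have hfc0 : 0 < D c ^ (pconj p - 1) * g c := hfpos c hcI
    set fc := D c ^ (pconj p - 1) * g c with hfcdef
    set ε := (fc / (2 * (M + 1))) ^ p with hε
    have hε0 : 0 < ε := Real.rpow_pos_of_pos (by positivity) _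
    have hεr : ε ^ (1/p) = fc / (2*(M+1)) := by
      rw [hε, ← Real.rpow_mul (by positivity), mul_one_div_cancel hp0.ne', Real.rpow_one]
    have hU : {v | y₀ v < ε ∧ fc / 2 < D v ^ (pconj p - 1) * g v} ∈ 𝓝 c := by
      apply Filter.inter_mem
      · exact (hy₀ca c hcI01).preimage_mem_nhds (Iio_mem_nhds (by rw [hyc0]; exact hε0))
      · exact hfc.preimage_mem_nhds (Ioi_mem_nhds (by linarith))
    obtain ⟨δ, hδ0, hδ⟩ := Metric.mem_nhds_iff.1 hU
    set d := min (c + δ/2) b with hd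
    have hcd : c < d := lt_min (by linarith) hcb
    have hdb : d ≤ b := min_le_right _ _
    have hsub : Icc c d ⊆ {v | y₀ v < ε ∧ fc / 2 < D v ^ (pconj p - 1) * g v} := by
      intro v hv
      apply hδ
      rw [Metric.mem_ball, Real.dist_eq, abs_of_nonneg (by linarith [hv.1])]
      have hvd : v ≤ c + δ/2 := le_trans hv.2 (min_le_left _ _)
      linarith
    have hanti : StrictAntiOn y₀ (Icc c d) := by
      apply strictAntiOn_of_deriv_neg (convex_Icc c d)
        (hy₀c.mono (Icc_subset_Icc (by linarith [hcI01.1]) (by linarith [hb1, hdb])))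
      intro v hv
      rw [interior_Icc] at hv
      have hv01 : v ∈ Ioo (0:ℝ) 1 :=
        ⟨lt_trans hcI01.1 hv.1, lt_of_lt_of_le hv.2 (le_trans hdb hb1.le)⟩
      have hyv : 0 < y₀ v := hcpos v ⟨hv.1, le_trans hv.2.le hdb⟩
      have hder := hy₀eq v hv01
      rw [max_eq_left hyv.le] at hder
      rw [hder.deriv]
      have hUv := hsub ⟨hv.1.le, hv.2.le⟩
      have h1 : h v * y₀ v ^ (1/p) ≤ M * ε ^ (1/p) := by
        apply mul_le_mul
        · exact le_trans (le_abs_self _) (by simpa using hM v ⟨hv01.1.le, hv01.2.le⟩)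
        · exact Real.rpow_le_rpow hyv.le hUv.1.le hinvp.le
        · positivity
        · exact hM0
      rw [hεr] at h1
      have h2 : M * (fc / (2*(M+1))) < fc / 2 := by
        rw [mul_div_assoc', div_lt_div_iff₀ (by linarith) two_pos]
        nlinarith
      have h3 : h v * y₀ v ^ (1/p) - D v ^ (pconj p - 1) * g v < 0 := by
        have := hUv.2
        linarith
      exact mul_neg_of_pos_of_neg hq0 h3
    have hcontr := hanti (left_mem_Icc.2 hcd.le) (right_mem_Icc.2 hcd.le) hcd
    rw [hyc0] at hcontr
    exact absurd hcontr (not_lt.2 (hcpos d ⟨hcd, hdb⟩).le)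
  -- now y₀ ≤ 0 on [a,1], contradiction with y₀ 1 = 0
  have ha1 : a < 1 := ha.2
  set d' := (a+1)/2 with hd'
  have had' : a < d' := by rw [hd']; linarith
  have hd'1 : d' < 1 := by rw [hd']; linarith
  have hzero : ∀ v, v ∈ Icc a 1 → v ∈ Ioo (0:ℝ) 1 →
      deriv y₀ v = pconj p * (0 - D v ^ (pconj p - 1) * g v) := by
    intro v hv hv01
    have hder := hy₀eq v hv01
    rw [max_eq_right (claim1 v hv), Real.zero_rpow (by positivity : (1:ℝ)/p ≠ 0),
      mul_zero] at hder
    exact hder.deriv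
  have hstep1 : StrictAntiOn y₀ (Icc a d') := by
    apply strictAntiOn_of_deriv_neg (convex_Icc a d')
      (hy₀c.mono (Icc_subset_Icc ha0.le hd'1.le))
    intro v hv
    rw [interior_Icc] at hv
    have hvθ1 : v ∈ Ioo θ 1 := ⟨lt_trans ha.1 hv.1, lt_trans hv.2 hd'1⟩
    rw [hzero v ⟨hv.1.le, (lt_trans hv.2 hd'1).le⟩ (hIoo01 hvθ1)]
    have := hfpos v hvθ1
    nlinarith
  have hstep2 : AntitoneOn y₀ (Icc d' 1) := by
    apply antitoneOn_of_deriv_nonpos (convex_Icc d' 1)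
      (hy₀c.mono (Icc_subset_Icc (by linarith) le_rfl))
    · intro v hv
      rw [interior_Icc] at hv
      exact (hy₀eq v ⟨by linarith [hv.1], hv.2⟩).differentiableAt.differentiableWithinAt
    · intro v hv
      rw [interior_Icc] at hv
      have hv01 : v ∈ Ioo (0:ℝ) 1 := ⟨by linarith [hv.1], hv.2⟩
      rw [hzero v ⟨by linarith [hv.1, had'], hv.2.le⟩ hv01]
      have := hfnn v hv01
      nlinarith
  have h1 : y₀ 1 ≤ y₀ d' := hstep2 (left_mem_Icc.2 hd'1.le) (right_mem_Icc.2 hd'1.le) hd'1.le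
  have h2 : y₀ d' < y₀ a := hstep1 (left_mem_Icc.2 had'.le) (right_mem_Icc.2 had'.le) had'
  have h3 : y₀ a ≤ 0 := claim1 a ⟨le_rfl, ha.2.le⟩
  rw [hy₀1] at h1
  linarith

lemma aux_pow_ineq {q : ℝ} (hq1 : 1 < q) (hq2 : q < 2) :
    ∀ s : ℝ, 0 ≤ s → (1 + s) ^ q ≤ 1 + q * s + s ^ q := by
  intro s hs
  have hq0 : (0:ℝ) < q := by linarith
  set F : ℝ → ℝ := fun t => 1 + q * t + t ^ q - (1 + t) ^ q with hF
  have hcont : ContinuousOn F (Ici 0) := by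
    apply ContinuousOn.sub
    · apply ContinuousOn.add (continuousOn_const.add (continuousOn_const.mul continuousOn_id))
      exact continuousOn_id.rpow_const (fun x _ => Or.inr hq0.le)
    · exact (continuousOn_const.add continuousOn_id).rpow_const (fun x _ => Or.inr hq0.le)
  have hder : ∀ x : ℝ, 0 < x →
      HasDerivAt F (q + q * x ^ (q - 1) - 1 * q * (1 + x) ^ (q - 1)) x := by
    intro x hx
    have d1 : HasDerivAt (fun t : ℝ => t ^ q) (q * x ^ (q - 1)) x :=
      Real.hasDerivAt_rpow_const (Or.inl hx.ne')
    have d2 : HasDerivAt (fun t : ℝ => (1 + t) ^ q) (1 * q * (1 + x) ^ (q - 1)) x := by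
      exact (HasDerivAt.const_add 1 (hasDerivAt_id x)).rpow_const (Or.inl (by positivity))
    have d0 : HasDerivAt (fun t : ℝ => 1 + q * t) q x := by
      simpa using (HasDerivAt.const_add 1 ((hasDerivAt_id x).const_mul q))
    exact (d0.add d1).sub d2
  have hmono : MonotoneOn F (Ici 0) := by
    apply monotoneOn_of_deriv_nonneg (convex_Ici 0) hcont
    · intro x hx
      rw [interior_Ici] at hx
      exact ((hder x hx).differentiableAt).differentiableWithinAt
    · intro x hx
      rw [interior_Ici] at hx
      rw [(hder x hx).deriv]
      have key : (1 + x) ^ (q - 1) ≤ 1 + x ^ (q - 1) := by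
        have h := NNReal.rpow_add_le_add_rpow 1 x.toNNReal (by linarith : (0:ℝ) ≤ q - 1)
          (by linarith : q - 1 ≤ 1)
        have h' := (NNReal.coe_le_coe).2 h
        push_cast [NNReal.coe_rpow] at h'
        rw [Real.coe_toNNReal x hx.le] at h'
        simpa [Real.one_rpow] using h'
      nlinarith [Real.rpow_nonneg hx.le (q - 1)]
  have h0 : F 0 = 0 := by
    simp [hF, Real.zero_rpow hq0.ne', Real.one_rpow]
  have := hmono (self_mem_Ici) hs hs
  rw [h0] at this
  simp only [hF] at this
  linarith

lemma kfun_lt_pconj {p : ℝ} (hp : 1 < p) : kfun p < pconj p := by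
  have hq1 : 1 < pconj p := one_lt_pconj hp
  rcases lt_trichotomy p 2 with h2 | h2 | h2
  · have hq2 : 2 < pconj p := by rw [pconj, lt_div_iff₀ (by linarith)]; linarith
    rw [kfun, if_pos h2]
    have h21 : (2:ℝ) < (2:ℝ) ^ (pconj p - 1) := by
      calc (2:ℝ) = (2:ℝ) ^ (1:ℝ) := (Real.rpow_one 2).symm
      _ < (2:ℝ) ^ (pconj p - 1) := Real.rpow_lt_rpow_of_exponent_lt one_lt_two (by linarith)
    have : 1 / ((2:ℝ) ^ (pconj p - 1) - 1) < 1 := by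
      rw [div_lt_one (by linarith)]; linarith
    linarith
  · subst h2
    rw [kfun, if_neg (lt_irrefl 2), if_pos rfl]
    exact hq1
  · have hq2 : pconj p < 2 := by rw [pconj, div_lt_iff₀ (by linarith)]; linarith
    rw [kfun, if_neg (by linarith), if_neg (by linarith)]
    set q := pconj p
    set s : ℝ := (q - 1) ^ ((1:ℝ) / (q - 2)) with hs'
    have hs : 0 < s := Real.rpow_pos_of_pos (by linarith) _
    have hsq : (q - 1) ^ (q / (q - 2)) = s ^ q := by
      rw [hs', ← Real.rpow_mul (by linarith : (0:ℝ) ≤ q - 1)]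
      congr 1; ring
    rw [hsq]
    have hdenpos : (0:ℝ) < (1 + s) ^ q := Real.rpow_pos_of_pos (by linarith) _
    have hA : 1 ≤ (1 + q * s + s ^ q) / (1 + s) ^ q :=
      (one_le_div hdenpos).2 (aux_pow_ineq hq1 hq2 s hs.le)
    exact div_lt_self (by linarith) (by linarith)


end StmtSixteenHelpers

/-- Lemma B.2, key inequality `y₀(θ)^{1/p'} > H(θ)`. -/
theorem stmt16 (p θ : ℝ) (D H h g y₀ : ℝ → ℝ) (S : CombSetup p θ D H h g)
    (hh0 : ∀ v ∈ Icc (0 : ℝ) 1, 0 ≤ h v)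
    (hcond : H 1 ^ pconj p ≤ kfun p * ∫ v in Ioo (0 : ℝ) 1, D v ^ (pconj p - 1) * g v)
    (hy₀c : ContinuousOn y₀ (Icc 0 1)) (hy₀1 : y₀ 1 = 0)
    (hy₀eq : ∀ v ∈ Ioo (0 : ℝ) 1, HasDerivAt y₀
      (pconj p * (h v * (max (y₀ v) 0) ^ (1 / p) - D v ^ (pconj p - 1) * g v)) v) :
    H θ < y₀ θ ^ (1 / pconj p) := by
  obtain ⟨hp, hθ0, hθ1, hD, hDpos, hH, hH0, hh, hHd, hgc, hg0, hgpos, hg1, hInt⟩ := S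
  have hp0 : (0:ℝ) < p := by linarith
  have hq1 : 1 < pconj p := one_lt_pconj hp
  have hq0 : (0:ℝ) < pconj p := by linarith
  have hqv : pconj p = p / (p - 1) := rfl
  have hp1 : (0:ℝ) < p - 1 := by linarith
  have hsum : 1 / p + 1 / pconj p = 1 := by rw [hqv]; field_simp; ring
  have hinvp : (0:ℝ) < 1/p := by positivity
  have hIoo01 : Ioo θ 1 ⊆ Ioo (0:ℝ) 1 := fun v hv => ⟨hθ0.trans hv.1, hv.2⟩
  have hIccsub : Icc θ 1 ⊆ Icc (0:ℝ) 1 := Icc_subset_Icc hθ0.le le_rfl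
  have hgnn : ∀ v ∈ Icc (0:ℝ) 1, 0 ≤ g v := by
    intro v hv
    rcases le_or_gt v θ with hx | hx
    · exact le_of_eq (hg0 v ⟨hv.1, hx⟩).symm
    · rcases lt_or_eq_of_le hv.2 with h1 | h1
      · exact (hgpos v ⟨hx, h1⟩).le
      · rw [h1, hg1]
  have hypos := step_pos hp hθ0 hθ1 hD.continuousOn hDpos hh hgc hgpos hgnn hy₀c hy₀1 hy₀eq
  have hHda : ∀ v ∈ Ioo (0:ℝ) 1, HasDerivAt H (h v) v := fun v hv =>
    (hHd v ⟨hv.1.le, hv.2.le⟩).hasDerivAt (Icc_mem_nhds hv.1 hv.2)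
  have hHmono : MonotoneOn H (Icc 0 1) := by
    apply monotoneOn_of_deriv_nonneg (convex_Icc 0 1) hH.continuousOn
    · intro v hv; rw [interior_Icc] at hv
      exact (hHda v hv).differentiableAt.differentiableWithinAt
    · intro v hv; rw [interior_Icc] at hv
      rw [(hHda v hv).deriv]; exact hh0 v ⟨hv.1.le, hv.2.le⟩
  have hHnn : ∀ v ∈ Icc (0:ℝ) 1, 0 ≤ H v := by
    intro v hv
    rw [← hH0]
    exact hHmono ⟨le_rfl, zero_le_one⟩ hv hv.1
  have hyθ : 0 ≤ y₀ θ := by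
    have ht : Tendsto y₀ (𝓝[>] θ) (𝓝 (y₀ θ)) :=
      (hy₀c.continuousAt (Icc_mem_nhds hθ0 hθ1)).tendsto.mono_left nhdsWithin_le_nhds
    refine ge_of_tendsto ht ?_
    filter_upwards [Ioo_mem_nhdsGT_of_mem ⟨le_rfl, hθ1⟩] with v hv
    exact (hypos v hv).le
  by_contra hcontra
  push_neg at hcontra
  have hyθle : y₀ θ ≤ H θ ^ pconj p := by
    have h1 := Real.rpow_le_rpow (Real.rpow_nonneg hyθ _) hcontra hq0.le
    rwa [← Real.rpow_mul hyθ, one_div_mul_cancel hq0.ne', Real.rpow_one] at h1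
  have hwanti : AntitoneOn (fun v => y₀ v ^ (1/pconj p) - H v) (Icc θ 1) := by
    have hderw : ∀ v ∈ Ioo θ 1, HasDerivAt (fun v => y₀ v ^ (1/pconj p) - H v)
        (-(D v ^ (pconj p - 1) * g v * y₀ v ^ (1/pconj p - 1))) v := by
      intro v hv
      have hv01 := hIoo01 hv
      have hyv : 0 < y₀ v := hypos v hv
      have hder := hy₀eq v hv01
      rw [max_eq_left hyv.le] at hder
      have hz := hder.rpow_const (p := 1/pconj p) (Or.inl hyv.ne')
      have hw := hz.sub (hHda v hv01)
      convert hw using 1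
      case e'_4 => rfl
      case e'_5 => rfl
      case e'_8 => rfl
      have hAB : y₀ v ^ (1/p) * y₀ v ^ (1/pconj p - 1) = 1 := by
        rw [← Real.rpow_add hyv]
        have he : 1/p + (1/pconj p - 1) = 0 := by linarith
        rw [he, Real.rpow_zero]
      have e1 : pconj p * (h v * y₀ v ^ (1 / p) - D v ^ (pconj p - 1) * g v) * (1 / pconj p)
          = h v * y₀ v ^ (1 / p) - D v ^ (pconj p - 1) * g v := by
        field_simp
      rw [e1]
      linear_combination (-(h v)) * hAB
    apply antitoneOn_of_deriv_nonpos (convex_Icc θ 1)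
    · apply ContinuousOn.sub
      · exact (hy₀c.mono hIccsub).rpow_const (fun x hx => Or.inr (by positivity))
      · exact hH.continuousOn.mono hIccsub
    · intro v hv; rw [interior_Icc] at hv
      exact (hderw v hv).differentiableAt.differentiableWithinAt
    · intro v hv; rw [interior_Icc] at hv
      rw [(hderw v hv).deriv]
      have h1 : 0 ≤ D v ^ (pconj p - 1) * g v :=
        mul_nonneg (Real.rpow_pos_of_pos (hDpos v (hIoo01 hv)) _).le
          (hgnn v ⟨(hθ0.trans hv.1).le, hv.2.le⟩)
      have h2 : 0 ≤ y₀ v ^ (1/pconj p - 1) := Real.rpow_nonneg (hypos v hv).le _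
      nlinarith
  have hkey : ∀ v ∈ Icc θ 1, 0 ≤ y₀ v ∧ y₀ v ≤ H v ^ pconj p := by
    intro v hv
    have hvnn : 0 ≤ y₀ v := by
      rcases eq_or_lt_of_le hv.1 with h1 | h1
      · rw [← h1]; exact hyθ
      · rcases eq_or_lt_of_le hv.2 with h2 | h2
        · rw [h2, hy₀1]
        · exact (hypos v ⟨h1, h2⟩).le
    refine ⟨hvnn, ?_⟩
    have hw := hwanti (left_mem_Icc.2 hθ1.le) hv hv.1
    simp only at hw
    have hzle : y₀ v ^ (1/pconj p) ≤ H v := by linarith [hcontra]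
    calc y₀ v = (y₀ v ^ (1/pconj p)) ^ pconj p := by
          rw [← Real.rpow_mul hvnn, one_div_mul_cancel hq0.ne', Real.rpow_one]
    _ ≤ H v ^ pconj p := Real.rpow_le_rpow (Real.rpow_nonneg hvnn _) hzle hq0.le
  -- integrability
  have hfii : IntervalIntegrable (fun v => D v ^ (pconj p - 1) * g v) volume θ 1 := by
    rw [intervalIntegrable_iff_integrableOn_Ioo_of_le hθ1.le]
    exact hInt.mono_set hIoo01
  have hmaxcont : ContinuousOn (fun v => pconj p * (h v * (max (y₀ v) 0) ^ (1/p))) (Icc θ 1) := by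
    apply ContinuousOn.mul continuousOn_const
    apply ContinuousOn.mul (hh.mono hIccsub)
    exact ((hy₀c.mono hIccsub).sup continuousOn_const).rpow_const (fun x hx => Or.inr hinvp.le)
  have hF1ii := hmaxcont.intervalIntegrable_of_Icc (μ := volume) hθ1.le
  have hHcomp : ContinuousOn (fun v => pconj p * (h v * H v ^ (pconj p - 1))) (Icc θ 1) := by
    apply ContinuousOn.mul continuousOn_const
    apply ContinuousOn.mul (hh.mono hIccsub)
    exact (hH.continuousOn.mono hIccsub).rpow_const (fun x hx => Or.inr (by linarith))
  have hF2ii := hHcomp.intervalIntegrable_of_Icc (μ := volume) hθ1.le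
  -- FTC for y₀
  have hftc1 : ∫ v in θ..1, (pconj p * (h v * (max (y₀ v) 0) ^ (1/p))
      - pconj p * (D v ^ (pconj p - 1) * g v)) = y₀ 1 - y₀ θ := by
    apply intervalIntegral.integral_eq_sub_of_hasDeriv_right_of_le hθ1.le (hy₀c.mono hIccsub)
    · intro v hv
      have hder := hy₀eq v (hIoo01 hv)
      have he : pconj p * (h v * (max (y₀ v) 0) ^ (1/p) - D v ^ (pconj p - 1) * g v)
          = pconj p * (h v * (max (y₀ v) 0) ^ (1/p)) - pconj p * (D v ^ (pconj p - 1) * g v) := by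
        ring
      rw [he] at hder
      exact hder.hasDerivWithinAt
    · exact hF1ii.sub (hfii.const_mul _)
  -- FTC for H ^ pconj p
  have hftc2 : ∫ v in θ..1, pconj p * (h v * H v ^ (pconj p - 1))
      = H 1 ^ pconj p - H θ ^ pconj p := by
    apply intervalIntegral.integral_eq_sub_of_hasDeriv_right_of_le
      (f := fun v => H v ^ pconj p) hθ1.le
    · exact (hH.continuousOn.mono hIccsub).rpow_const (fun x hx => Or.inr hq0.le)
    · intro v hv
      have hd := (hHda v (hIoo01 hv)).rpow_const (p := pconj p) (Or.inr hq1.le)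
      have he : h v * pconj p * H v ^ (pconj p - 1)
          = pconj p * (h v * H v ^ (pconj p - 1)) := by ring
      rw [he] at hd
      exact hd.hasDerivWithinAt
    · exact hF2ii
  have hmono : ∫ v in θ..1, pconj p * (h v * (max (y₀ v) 0) ^ (1/p))
      ≤ ∫ v in θ..1, pconj p * (h v * H v ^ (pconj p - 1)) := by
    apply intervalIntegral.integral_mono_on hθ1.le hF1ii hF2ii
    intro v hv
    obtain ⟨hvnn, hvle⟩ := hkey v hv
    have hHv : 0 ≤ H v := hHnn v (hIccsub hv)
    have h1 : (max (y₀ v) 0) ^ ((1:ℝ)/p) ≤ H v ^ (pconj p - 1) := by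
      rw [max_eq_left hvnn]
      calc y₀ v ^ ((1:ℝ)/p) ≤ (H v ^ pconj p) ^ ((1:ℝ)/p) :=
            Real.rpow_le_rpow hvnn hvle hinvp.le
      _ = H v ^ (pconj p - 1) := by
          rw [← Real.rpow_mul hHv]
          congr 1
          rw [hqv]; field_simp; ring
    have h2 : 0 ≤ h v := hh0 v (hIccsub hv)
    apply mul_le_mul_of_nonneg_left _ hq0.le
    exact mul_le_mul_of_nonneg_left h1 h2
  -- integral over (θ,1) equals integral over (0,1)
  have hIoneq : ∫ v in Ioo (0:ℝ) 1, D v ^ (pconj p - 1) * g v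
      = ∫ v in Ioo θ 1, D v ^ (pconj p - 1) * g v := by
    have hsplit : Ioo (0:ℝ) 1 = Ioc 0 θ ∪ Ioo θ 1 := (Ioc_union_Ioo_eq_Ioo hθ0.le hθ1).symm
    have hdisj : Disjoint (Ioc (0:ℝ) θ) (Ioo θ 1) :=
      disjoint_left.2 fun v hv1 hv2 => absurd hv2.1 (not_lt.2 hv1.2)
    have hi1 : IntegrableOn (fun v => D v ^ (pconj p - 1) * g v) (Ioc 0 θ) volume :=
      hInt.mono_set (fun v hv => ⟨hv.1, lt_of_le_of_lt hv.2 hθ1⟩)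
    have hi2 : IntegrableOn (fun v => D v ^ (pconj p - 1) * g v) (Ioo θ 1) volume :=
      hInt.mono_set hIoo01
    rw [hsplit, setIntegral_union hdisj measurableSet_Ioo hi1 hi2]
    have hzero : ∫ v in Ioc (0:ℝ) θ, D v ^ (pconj p - 1) * g v = 0 := by
      rw [setIntegral_congr_fun measurableSet_Ioc
        (fun v hv => by rw [hg0 v ⟨hv.1.le, hv.2⟩, mul_zero] : EqOn _ (fun _ => (0:ℝ)) _)]
      simp
    rw [hzero, zero_add]
  have hIval : ∫ v in θ..1, D v ^ (pconj p - 1) * g v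
      = ∫ v in Ioo (0:ℝ) 1, D v ^ (pconj p - 1) * g v := by
    rw [intervalIntegral.integral_of_le hθ1.le, MeasureTheory.integral_Ioc_eq_integral_Ioo,
      hIoneq]
  have hIpos : 0 < ∫ v in θ..1, D v ^ (pconj p - 1) * g v := by
    apply intervalIntegral.intervalIntegral_pos_of_pos_on hfii _ hθ1
    intro v hv
    exact mul_pos (Real.rpow_pos_of_pos (hDpos v (hIoo01 hv)) _) (hgpos v hv)
  have hconst : ∫ v in θ..1, pconj p * (D v ^ (pconj p - 1) * g v)
      = pconj p * ∫ v in θ..1, D v ^ (pconj p - 1) * g v :=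
    intervalIntegral.integral_const_mul _ _
  rw [intervalIntegral.integral_sub hF1ii (hfii.const_mul _), hconst, hy₀1, zero_sub] at hftc1
  have hklt := kfun_lt_pconj hp
  have hfin : H 1 ^ pconj p ≤ kfun p * ∫ v in θ..1, D v ^ (pconj p - 1) * g v := by
    rw [hIval]; exact hcond
  nlinarith [mul_pos (sub_pos.2 hklt) hIpos, hmono, hftc2, hftc1, hyθle, hfin]
end
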